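/- Let S₀ be a weakly compatible collection of splits of a set X and, for each S ∈ S₀, let λ_S ∈ (0,∞). Assume that for every x,y ∈ X the (possibly infinite) sum d(x,y) := ∑_{S ∈ S₀} λ_S δ_S(x,y) converges to a nonnegative integer. Then d is a pseudometric, S₀ is exactly the set of all d-splits of X, and for each S ∈ S₀ the isolation index α^d_S equals λ_S. -/

import Mathlib

open Set Function

noncomputable section

variable {X : Type*}

/-- `d` is a pseudometric on `X`. -/
def IsPseudometric (d : X → X → ℝ) : Prop :=
  (∀ x, d x x = 0) ∧ (∀ x y, d x y = d y x) ∧ ∀ x y z, d x z ≤ d x y + d y z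

/-- `d` is a metric on `X`. -/
def IsMetric (d : X → X → ℝ) : Prop :=
  IsPseudometric d ∧ ∀ x y, d x y = 0 → x = y

/-- `d` is integer-valued. -/
def IsIntegerValued (d : X → X → ℝ) : Prop := ∀ x y, ∃ n : ℤ, d x y = (n : ℝ)

/-- The quantity `β^d` associated to the four points `a, a', b, b'`. -/
def betaIdx (d : X → X → ℝ) (a a' b b' : X) : ℝ :=
  (max (max (d a b + d a' b') (d a' b + d a b')) (d a a' + d b b') - d a a' - d b b') / 2

/-- The isolation index `α^d_{{A,B}}` of the pair `{A,B}`. -/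
def isolIdx (d : X → X → ℝ) (A B : Set X) : ℝ :=
  sInf {r : ℝ | ∃ a ∈ A, ∃ a' ∈ A, ∃ b ∈ B, ∃ b' ∈ B, r = betaIdx d a a' b b'}

/-- `{A, B}` is a partial split of `X`. -/
def IsPartialSplit (A B : Set X) : Prop := A.Nonempty ∧ B.Nonempty ∧ Disjoint A B

/-- `{A, B}` is a split of `X`. -/
def IsSplit (A B : Set X) : Prop := IsPartialSplit A B ∧ A ∪ B = univ

/-- `{A, B}` is a `d`-split of `X`. -/
def IsDSplit (d : X → X → ℝ) (A B : Set X) : Prop := IsSplit A B ∧ 0 < isolIdx d A B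

open Classical in
noncomputable def ee (w : ℝ) (p q : Prop) : ℝ := if p ↔ q then 0 else w

noncomputable def gg3 (w : ℝ) (p q r s : Prop) : ℝ :=
  max (max (ee w p r + ee w q s) (ee w q r + ee w p s)) (ee w p q + ee w r s)

theorem gg3_ne1 (w : ℝ) (hw : 0 ≤ w) (p q r s : Prop)
    (h : gg3 w p q r s ≠ ee w p r + ee w q s) :
    (p ↔ r) ∧ (q ↔ s) ∧ ¬(p ↔ q) ∧ 0 < w := by
  rcases hw.eq_or_lt with rfl | hw
  · simp [gg3, ee] at h
  · by_cases hp : p <;> by_cases hq : q <;> by_cases hr : r <;> by_cases hs : s <;>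
      simp [gg3, ee, hp, hq, hr, hs, hw, max_def] at h ⊢

theorem gg3_ne2 (w : ℝ) (hw : 0 ≤ w) (p q r s : Prop)
    (h : gg3 w p q r s ≠ ee w q r + ee w p s) :
    (q ↔ r) ∧ (p ↔ s) ∧ ¬(p ↔ q) ∧ 0 < w := by
  rcases hw.eq_or_lt with rfl | hw
  · simp [gg3, ee] at h
  · by_cases hp : p <;> by_cases hq : q <;> by_cases hr : r <;> by_cases hs : s <;>
      simp [gg3, ee, hp, hq, hr, hs, hw, max_def] at h ⊢ <;>
      (exact absurd h.2.1 (by linarith))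

theorem gg3_ne3 (w : ℝ) (hw : 0 ≤ w) (p q r s : Prop)
    (h : gg3 w p q r s ≠ ee w p q + ee w r s) :
    (p ↔ q) ∧ (r ↔ s) ∧ ¬(p ↔ r) ∧ 0 < w := by
  rcases hw.eq_or_lt with rfl | hw
  · simp [gg3, ee] at h
  · by_cases hp : p <;> by_cases hq : q <;> by_cases hr : r <;> by_cases hs : s <;>
      simp [gg3, ee, hp, hq, hr, hs, hw, max_def] at h ⊢ <;>
      (exact absurd h.2.1 (by linarith))

open Classical in
theorem gg3_sub (w : ℝ) (hw : 0 ≤ w) (p q r s : Prop) :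
    gg3 w p q r s - (ee w p q + ee w r s)
      = 2 * ((if p ∧ q ∧ ¬r ∧ ¬s then w else 0) + (if ¬p ∧ ¬q ∧ r ∧ s then w else 0)) := by
  by_cases hp : p <;> by_cases hq : q <;> by_cases hr : r <;> by_cases hs : s <;>
    simp [gg3, ee, hp, hq, hr, hs, max_def] <;> split_ifs <;> linarith

theorem wc_helper {X : Type*} (𝒮 : Set (Set X)) (C U V : Set X) (a x1 x2 x3 : X)
    (hC : C ∈ 𝒮) (hU : U ∈ 𝒮) (hV : V ∈ 𝒮)
    (h1 : a ∈ C ↔ x1 ∈ C) (h2 : ¬(a ∈ C ↔ x2 ∈ C)) (h3 : ¬(a ∈ C ↔ x3 ∈ C))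
    (h4 : ¬(a ∈ U ↔ x1 ∈ U)) (h5 : a ∈ U ↔ x2 ∈ U) (h6 : ¬(a ∈ U ↔ x3 ∈ U))
    (h7 : ¬(a ∈ V ↔ x1 ∈ V)) (h8 : ¬(a ∈ V ↔ x2 ∈ V)) (h9 : a ∈ V ↔ x3 ∈ V) :
    ∃ (x₀ : X) (x : Fin 3 → X) (T : Fin 3 → Set X),
      (∀ i, T i ∈ 𝒮) ∧ ∀ i j, ((x₀ ∈ T i ↔ x j ∈ T i) ↔ i = j) := by
  refine ⟨a, ![x1, x2, x3], ![C, U, V], ?_, ?_⟩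
  · intro i; fin_cases i <;> assumption
  · intro i j; fin_cases i <;> fin_cases j <;> simp_all

def sep4 (𝒮 : Set (Set X)) (a a' b b' : X) : Set (Set X) :=
  {A | A ∈ 𝒮 ∧ a ∈ A ∧ a' ∈ A ∧ b ∉ A ∧ b' ∉ A}

theorem exists_least_halfnat (S : Set ℝ) (hne : S.Nonempty)
    (h : ∀ x ∈ S, ∃ n : ℕ, x = n / 2) : IsLeast S (sInf S) := by
  set N : Set ℕ := {n : ℕ | (n : ℝ) / 2 ∈ S} with hN
  have hNne : N.Nonempty := by
    obtain ⟨x, hx⟩ := hne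
    obtain ⟨n, rfl⟩ := h x hx
    exact ⟨n, hx⟩
  have hmem : (sInf N : ℕ) ∈ N := Nat.sInf_mem hNne
  have hleast : IsLeast S ((sInf N : ℕ) / 2 : ℝ) := by
    refine ⟨hmem, fun x hx => ?_⟩
    obtain ⟨n, rfl⟩ := h x hx
    have : sInf N ≤ n := Nat.sInf_le hx
    have : ((sInf N : ℕ) : ℝ) ≤ n := by exact_mod_cast this
    linarith
  rwa [hleast.csInf_eq]

open Classical in
/-- The split pseudometric `δ_S` of the split `{A, Aᶜ}`. -/
def splitDist (A : Set X) (x y : X) : ℝ := if x ∈ A ↔ y ∈ A then 0 else 1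

theorem statement8 (𝒮 : Set (Set X))
    (hsplit : ∀ A ∈ 𝒮, IsSplit A Aᶜ)
    (hcompl : ∀ A ∈ 𝒮, Aᶜ ∈ 𝒮)
    (hwc : ¬ ∃ (x₀ : X) (x : Fin 3 → X) (T : Fin 3 → Set X),
      (∀ i, T i ∈ 𝒮) ∧ ∀ i j, ((x₀ ∈ T i ↔ x j ∈ T i) ↔ i = j))
    (lam : Set X → ℝ) (hpos : ∀ A ∈ 𝒮, 0 < lam A) (hsymm : ∀ A ∈ 𝒮, lam A = lam Aᶜ)
    (d : X → X → ℝ)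
    (hsum : ∀ x y : X,
      HasSum (fun A : {A : Set X // A ∈ 𝒮 ∧ x ∈ A ∧ y ∉ A} => lam A.1) (d x y))
    (hnat : ∀ x y, ∃ n : ℕ, d x y = (n : ℝ)) :
    IsPseudometric d ∧ (∀ A : Set X, A ∈ 𝒮 ↔ IsDSplit d A Aᶜ) ∧
      ∀ A ∈ 𝒮, isolIdx d A Aᶜ = lam A := by
  classical
  set w : Set X → ℝ := 𝒮.indicator lam with hw_def
  have hw0 : ∀ A, 0 ≤ w A := by
    intro A
    by_cases h : A ∈ 𝒮
    · simp [w, Set.indicator_of_mem h]; exact (hpos A h).le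
    · simp [w, Set.indicator_of_notMem h]
  have hwS : ∀ A ∈ 𝒮, w A = lam A := fun A h => Set.indicator_of_mem h lam
  have hwmem : ∀ A, w A ≠ 0 → A ∈ 𝒮 := by
    intro A h
    by_contra hA
    exact h (Set.indicator_of_notMem hA lam)
  -- basic sums
  have hD : ∀ x y, HasSum (Set.indicator {A | A ∈ 𝒮 ∧ x ∈ A ∧ y ∉ A} w) (d x y) := by
    intro x y
    have h1 : HasSum (Set.indicator {A | A ∈ 𝒮 ∧ x ∈ A ∧ y ∉ A} lam) (d x y) := by
      rw [← hasSum_subtype_iff_indicator]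
      exact hsum x y
    have : Set.indicator {A | A ∈ 𝒮 ∧ x ∈ A ∧ y ∉ A} lam
        = Set.indicator {A | A ∈ 𝒮 ∧ x ∈ A ∧ y ∉ A} w :=
      Set.indicator_congr fun A hA => (hwS A hA.1).symm
    rwa [this] at h1
  -- complement re-indexing
  have hequiv : ∀ (P Q : Set (Set X)), (∀ A ∈ P, A ∈ 𝒮) → (∀ A ∈ P, Aᶜ ∈ Q) →
      (∀ A ∈ Q, Aᶜ ∈ P) → ∀ t, HasSum (P.indicator w) t → HasSum (Q.indicator w) t := by
    intro P Q hPS hPQ hQP t hP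
    rw [← hasSum_subtype_iff_indicator] at hP ⊢
    have h' : HasSum (fun A : P => w ((A : Set X)ᶜ)) t := by
      have hfun : (fun A : P => w ((A : Set X)ᶜ)) = (fun A : P => w (A : Set X)) := by
        funext A
        have hAS := hPS A A.2
        show w ((A : Set X)ᶜ) = w (A : Set X)
        rw [hwS _ hAS, hwS _ (hcompl _ hAS), ← hsymm _ hAS]
      rw [hfun]
      exact hP
    exact (Equiv.hasSum_iff (⟨fun A => ⟨(A : Set X)ᶜ, hPQ A A.2⟩,
      fun A => ⟨(A : Set X)ᶜ, hQP A A.2⟩,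
      fun A => Subtype.ext (compl_compl _),
      fun A => Subtype.ext (compl_compl _)⟩ : P ≃ Q)).mp h'
  have hsummable : ∀ (P Q : Set (Set X)), P ⊆ Q → Summable (Q.indicator w) →
      Summable (P.indicator w) := by
    intro P Q hPQ hQ
    have : P.indicator w = P.indicator (Q.indicator w) := by
      funext A
      by_cases hA : A ∈ P
      · simp [Set.indicator_of_mem hA, Set.indicator_of_mem (hPQ hA)]
      · simp [Set.indicator_of_notMem hA]
    rw [this]
    exact hQ.indicator P
  -- monotonicity and subtraction for sums
  have hmono : ∀ (P Q : Set (Set X)) (t u : ℝ), HasSum (P.indicator w) t →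
      HasSum (Q.indicator w) u → P ⊆ Q → t ≤ u := by
    intro P Q t u hP hQ hPQ
    exact hasSum_le (fun A => Set.indicator_le_indicator_of_subset hPQ hw0 A) hP hQ
  have hsingle : ∀ C : Set X, HasSum (Set.indicator {C} w) (w C) := by
    intro C
    have : Set.indicator {C} w = fun A => if A = C then w C else 0 := by
      funext A
      by_cases h : A = C <;> simp [h]
    rw [this]
    exact hasSum_ite_eq C (w C)
  have hsub : ∀ (P Q : Set (Set X)) (C : Set X) (t u : ℝ), HasSum (P.indicator w) t →
      HasSum (Q.indicator w) u → P ⊆ Q → C ∈ Q → C ∉ P → t + w C ≤ u := by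
    intro P Q C t u hP hQ hPQ hCQ hCP
    refine hasSum_le (fun A => ?_) (hP.add (hsingle C)) hQ
    by_cases hAC : A = C
    · subst hAC
      simp [Set.indicator_of_notMem hCP, Set.indicator_of_mem hCQ,
        Set.indicator_of_mem (Set.mem_singleton A)]
    · have : Set.indicator {C} w A = 0 := Set.indicator_of_notMem (by simp [hAC]) w
      rw [this, add_zero]
      exact Set.indicator_le_indicator_of_subset hPQ hw0 A
  -- pseudometric
  have hdxx : ∀ x, d x x = 0 := by
    intro x
    haveI : IsEmpty {A : Set X // A ∈ 𝒮 ∧ x ∈ A ∧ x ∉ A} :=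
      ⟨fun A => A.2.2.2 A.2.2.1⟩
    exact (hsum x x).unique hasSum_empty
  have hdsymm : ∀ x y, d x y = d y x := by
    intro x y
    refine (hequiv {A | A ∈ 𝒮 ∧ x ∈ A ∧ y ∉ A} {A | A ∈ 𝒮 ∧ y ∈ A ∧ x ∉ A}
      (fun A hA => hA.1) ?_ ?_ (d x y) (hD x y)).unique (hD y x)
    · rintro A ⟨h1, h2, h3⟩
      exact ⟨hcompl A h1, h3, fun hc => hc h2⟩
    · rintro A ⟨h1, h2, h3⟩
      exact ⟨hcompl A h1, h3, fun hc => hc h2⟩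
  have htri : ∀ x y z, d x z ≤ d x y + d y z := by
    intro x y z
    obtain ⟨t1, h1⟩ := hsummable {A | A ∈ 𝒮 ∧ x ∈ A ∧ z ∉ A ∧ y ∉ A}
      {A | A ∈ 𝒮 ∧ x ∈ A ∧ z ∉ A} (fun A hA => ⟨hA.1, hA.2.1, hA.2.2.1⟩) (hD x z).summable
    obtain ⟨t2, h2⟩ := hsummable {A | A ∈ 𝒮 ∧ x ∈ A ∧ z ∉ A ∧ y ∈ A}
      {A | A ∈ 𝒮 ∧ x ∈ A ∧ z ∉ A} (fun A hA => ⟨hA.1, hA.2.1, hA.2.2.1⟩) (hD x z).summable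
    have hfun : (fun A => Set.indicator {A | A ∈ 𝒮 ∧ x ∈ A ∧ z ∉ A ∧ y ∉ A} w A
        + Set.indicator {A | A ∈ 𝒮 ∧ x ∈ A ∧ z ∉ A ∧ y ∈ A} w A)
        = Set.indicator {A | A ∈ 𝒮 ∧ x ∈ A ∧ z ∉ A} w := by
      funext A
      by_cases hy : y ∈ A <;>
        simp [Set.indicator_apply, Set.mem_setOf_eq, hy, and_assoc] <;>
        (split_ifs <;> tauto)
    have hdxz : t1 + t2 = d x z := (hfun ▸ h1.add h2).unique (hD x z)
    have ht1 : t1 ≤ d x y :=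
      hmono _ _ _ _ h1 (hD x y) (fun A hA => ⟨hA.1, hA.2.1, hA.2.2.2⟩)
    have ht2 : t2 ≤ d y z :=
      hmono _ _ _ _ h2 (hD y z) (fun A hA => ⟨hA.1, hA.2.2.2, hA.2.2.1⟩)
    linarith
  -- key: beta formula
  have key : ∀ a a' b b',
      HasSum ((sep4 𝒮 a a' b b').indicator w) (betaIdx d a a' b b') := by
    intro a a' b b'
    have he : ∀ x y, HasSum (fun A => ee (w A) (x ∈ A) (y ∈ A)) (2 * d x y) := by
      intro x y
      have hfun : (fun A => ee (w A) (x ∈ A) (y ∈ A))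
          = fun A => Set.indicator {A | A ∈ 𝒮 ∧ x ∈ A ∧ y ∉ A} w A
            + Set.indicator {A | A ∈ 𝒮 ∧ y ∈ A ∧ x ∉ A} w A := by
        funext A
        by_cases hS : A ∈ 𝒮
        · by_cases hx : x ∈ A <;> by_cases hy : y ∈ A <;>
            simp [ee, Set.indicator_apply, hS, hx, hy]
        · have hw' : w A = 0 := Set.indicator_of_notMem hS lam
          simp [ee, Set.indicator_apply, hS, hw']
      rw [hfun]
      have h2 := (hD x y).add (hdsymm x y ▸ hD y x)
      convert h2 using 1
      ring
    have hs1 : HasSum (fun A => ee (w A) (a ∈ A) (b ∈ A) + ee (w A) (a' ∈ A) (b' ∈ A))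
        (2 * (d a b + d a' b')) := by
      have h2 := (he a b).add (he a' b'); convert h2 using 1; ring
    have hs2 : HasSum (fun A => ee (w A) (a' ∈ A) (b ∈ A) + ee (w A) (a ∈ A) (b' ∈ A))
        (2 * (d a' b + d a b')) := by
      have h2 := (he a' b).add (he a b'); convert h2 using 1; ring
    have hs3 : HasSum (fun A => ee (w A) (a ∈ A) (a' ∈ A) + ee (w A) (b ∈ A) (b' ∈ A))
        (2 * (d a a' + d b b')) := by
      have h2 := (he a a').add (he b b'); convert h2 using 1; ring
    have hex : (∀ A : Set X, gg3 (w A) (a ∈ A) (a' ∈ A) (b ∈ A) (b' ∈ A)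
          = ee (w A) (a ∈ A) (b ∈ A) + ee (w A) (a' ∈ A) (b' ∈ A))
        ∨ (∀ A : Set X, gg3 (w A) (a ∈ A) (a' ∈ A) (b ∈ A) (b' ∈ A)
          = ee (w A) (a' ∈ A) (b ∈ A) + ee (w A) (a ∈ A) (b' ∈ A))
        ∨ (∀ A : Set X, gg3 (w A) (a ∈ A) (a' ∈ A) (b ∈ A) (b' ∈ A)
          = ee (w A) (a ∈ A) (a' ∈ A) + ee (w A) (b ∈ A) (b' ∈ A)) := by
      by_contra hcon
      push_neg at hcon
      obtain ⟨⟨A1, hA1⟩, ⟨A2, hA2⟩, ⟨A3, hA3⟩⟩ := hcon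
      obtain ⟨p1, q1, r1, w1⟩ := gg3_ne1 (w A1) (hw0 A1) _ _ _ _ hA1
      obtain ⟨p2, q2, r2, w2⟩ := gg3_ne2 (w A2) (hw0 A2) _ _ _ _ hA2
      obtain ⟨p3, q3, r3, w3⟩ := gg3_ne3 (w A3) (hw0 A3) _ _ _ _ hA3
      have m1 : A1 ∈ 𝒮 := hwmem A1 w1.ne'
      have m2 : A2 ∈ 𝒮 := hwmem A2 w2.ne'
      have m3 : A3 ∈ 𝒮 := hwmem A3 w3.ne'
      exact hwc (wc_helper 𝒮 A1 A2 A3 a b b' a' m1 m2 m3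
        p1 (fun h => r1 (h.trans q1.symm)) r1
        (fun h => r2 (h.trans p2.symm)) q2 r2
        r3 (fun h => r3 (h.trans q3.symm)) p3)
    -- generic continuation
    have hcont : ∀ P : ℝ,
        HasSum (fun A => gg3 (w A) (a ∈ A) (a' ∈ A) (b ∈ A) (b' ∈ A)) (2 * P) →
        P ≤ max (max (d a b + d a' b') (d a' b + d a b')) (d a a' + d b b') →
        HasSum ((sep4 𝒮 a a' b b').indicator w) (betaIdx d a a' b b') := by
      intro P hgP hPle
      have hle1 : 2 * (d a b + d a' b') ≤ 2 * P := by
        refine hasSum_le (fun A => ?_) hs1 hgP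
        exact le_trans (le_max_left _ _) (le_max_left _ _)
      have hle2 : 2 * (d a' b + d a b') ≤ 2 * P := by
        refine hasSum_le (fun A => ?_) hs2 hgP
        exact le_trans (le_max_right _ _) (le_max_left _ _)
      have hle3 : 2 * (d a a' + d b b') ≤ 2 * P := by
        refine hasSum_le (fun A => ?_) hs3 hgP
        exact le_max_right _ _
      have hmax : max (max (d a b + d a' b') (d a' b + d a b')) (d a a' + d b b') = P := by
        apply le_antisymm _ hPle
        simp only [max_le_iff]
        constructor
        · constructor <;> linarith
        · linarith
      have hsub2 : HasSum
          (fun A => gg3 (w A) (a ∈ A) (a' ∈ A) (b ∈ A) (b' ∈ A)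
            - (ee (w A) (a ∈ A) (a' ∈ A) + ee (w A) (b ∈ A) (b' ∈ A)))
          (2 * P - 2 * (d a a' + d b b')) := hgP.sub hs3
      have hfun2 : (fun A => gg3 (w A) (a ∈ A) (a' ∈ A) (b ∈ A) (b' ∈ A)
            - (ee (w A) (a ∈ A) (a' ∈ A) + ee (w A) (b ∈ A) (b' ∈ A)))
          = fun A => 2 * ((sep4 𝒮 a a' b b').indicator w A
            + (sep4 𝒮 b b' a a').indicator w A) := by
        funext A
        rw [gg3_sub (w A) (hw0 A)]
        congr 1
        by_cases hS : A ∈ 𝒮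
        · by_cases h1 : a ∈ A <;> by_cases h2 : a' ∈ A <;> by_cases h3 : b ∈ A <;>
            by_cases h4 : b' ∈ A <;>
            simp [sep4, Set.indicator_apply, hS, h1, h2, h3, h4]
        · have hw' : w A = 0 := Set.indicator_of_notMem hS lam
          simp [sep4, Set.indicator_apply, hS, hw']
      rw [hfun2] at hsub2
      have hpair : HasSum (fun A => (sep4 𝒮 a a' b b').indicator w A
          + (sep4 𝒮 b b' a a').indicator w A) (P - (d a a' + d b b')) := by
        have h3 := hsub2.mul_left (1/2 : ℝ)
        have : (fun A => (1/2 : ℝ) * (2 * ((sep4 𝒮 a a' b b').indicator w A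
            + (sep4 𝒮 b b' a a').indicator w A)))
            = fun A => (sep4 𝒮 a a' b b').indicator w A
              + (sep4 𝒮 b b' a a').indicator w A := by
          funext A; ring
        rw [this] at h3
        convert h3 using 1
        · rfl
        ring
      obtain ⟨t1, ht1⟩ : Summable ((sep4 𝒮 a a' b b').indicator w) := by
        refine Summable.of_nonneg_of_le (fun A => ?_) (fun A => ?_) hpair.summable
        · exact Set.indicator_apply_nonneg (fun _ => hw0 A)
        · exact le_add_of_nonneg_right (Set.indicator_apply_nonneg (fun _ => hw0 A))
      have ht2 : HasSum ((sep4 𝒮 b b' a a').indicator w) (P - (d a a' + d b b') - t1) := by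
        have h4 := hpair.sub ht1
        have : (fun A => ((sep4 𝒮 a a' b b').indicator w A
            + (sep4 𝒮 b b' a a').indicator w A) - (sep4 𝒮 a a' b b').indicator w A)
            = (sep4 𝒮 b b' a a').indicator w := by
          funext A; ring
        rwa [this] at h4
      have ht2' : HasSum ((sep4 𝒮 b b' a a').indicator w) t1 := by
        refine hequiv (sep4 𝒮 a a' b b') (sep4 𝒮 b b' a a') (fun A hA => hA.1)
          ?_ ?_ t1 ht1
        · rintro A ⟨h1, h2, h3, h4, h5⟩
          exact ⟨hcompl A h1, h4, h5, by simpa using h2, by simpa using h3⟩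
        · rintro A ⟨h1, h2, h3, h4, h5⟩
          exact ⟨hcompl A h1, h4, h5, by simpa using h2, by simpa using h3⟩
      have ht1val : t1 = (P - (d a a' + d b b')) / 2 := by
        have := ht2'.unique ht2
        linarith
      have hbeta : betaIdx d a a' b b' = t1 := by
        rw [betaIdx, hmax, ht1val]
        ring
      rwa [hbeta]
    obtain hgi | hgi | hgi := hex
    · exact hcont (d a b + d a' b') (by rw [funext hgi]; exact hs1)
        (le_trans (le_max_left _ _) (le_max_left _ _))
    · exact hcont (d a' b + d a b') (by rw [funext hgi]; exact hs2)
        (le_trans (le_max_right _ _) (le_max_left _ _))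
    · exact hcont (d a a' + d b b') (by rw [funext hgi]; exact hs3)
        (le_max_right _ _)
  -- beta is a half-natural
  have hhalf : ∀ a a' b b', ∃ n : ℕ, betaIdx d a a' b b' = n / 2 := by
    intro a a' b b'
    obtain ⟨n1, e1⟩ := hnat a b
    obtain ⟨n2, e2⟩ := hnat a' b'
    obtain ⟨n3, e3⟩ := hnat a' b
    obtain ⟨n4, e4⟩ := hnat a b'
    obtain ⟨n5, e5⟩ := hnat a a'
    obtain ⟨n6, e6⟩ := hnat b b'
    refine ⟨max (max (n1 + n2) (n3 + n4)) (n5 + n6) - (n5 + n6), ?_⟩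
    have hle : n5 + n6 ≤ max (max (n1 + n2) (n3 + n4)) (n5 + n6) := le_max_right _ _
    rw [betaIdx, e1, e2, e3, e4, e5, e6]
    push_cast [Nat.cast_sub hle]
    ring
  -- reduction step
  have reduce : ∀ (A : Set X) (a a' b b' : X), a ∈ A → a' ∈ A → b ∉ A → b' ∉ A →
      ∀ C ∈ sep4 𝒮 a a' b b', C ≠ A →
      ∃ a₁ a₁' b₁ b₁', a₁ ∈ A ∧ a₁' ∈ A ∧ b₁ ∉ A ∧ b₁' ∉ A ∧
        betaIdx d a₁ a₁' b₁ b₁' < betaIdx d a a' b b' := by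
    intro A a a' b b' ha ha' hb hb' C hC hCA
    obtain ⟨hCS, haC, haC', hbC, hbC'⟩ := hC
    have hwC : 0 < w C := by rw [hwS C hCS]; exact hpos C hCS
    have hdec : ∀ a₁ a₁' b₁ b₁', sep4 𝒮 a₁ a₁' b₁ b₁' ⊆ sep4 𝒮 a a' b b' →
        C ∉ sep4 𝒮 a₁ a₁' b₁ b₁' →
        betaIdx d a₁ a₁' b₁ b₁' < betaIdx d a a' b b' := by
      intro a₁ a₁' b₁ b₁' hss hCn
      have := hsub _ _ C _ _ (key a₁ a₁' b₁ b₁') (key a a' b b') hss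
        ⟨hCS, haC, haC', hbC, hbC'⟩ hCn
      linarith
    obtain ⟨c, hc⟩ : ∃ c, ¬(c ∈ C ↔ c ∈ A) := by
      by_contra h
      push_neg at h
      exact hCA (Set.ext h)
    by_cases hcC : c ∈ C
    · -- c ∈ C \ A
      have hcA : c ∉ A := fun h => hc ⟨fun _ => h, fun _ => hcC⟩
      have hclaim : sep4 𝒮 a a' b c ⊆ sep4 𝒮 a a' b b'
          ∨ sep4 𝒮 a a' b' c ⊆ sep4 𝒮 a a' b b' := by
        by_contra hcl
        push_neg at hcl
        obtain ⟨U, hU, hU'⟩ := Set.not_subset.mp hcl.1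
        obtain ⟨V, hV, hV'⟩ := Set.not_subset.mp hcl.2
        obtain ⟨hUS, haU, haU', hbU, hcU⟩ := hU
        obtain ⟨hVS, haV, haV', hbV', hcV⟩ := hV
        have hbU' : b' ∈ U := by
          by_contra h; exact hU' ⟨hUS, haU, haU', hbU, h⟩
        have hbV : b ∈ V := by
          by_contra h; exact hV' ⟨hVS, haV, haV', h, hbV'⟩
        refine hwc (wc_helper 𝒮 C U V a c b' b hCS hUS hVS
          ⟨fun _ => hcC, fun _ => haC⟩ ?_ ?_ ?_ ⟨fun _ => hbU', fun _ => haU⟩ ?_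
          ?_ ?_ ⟨fun _ => hbV, fun _ => haV⟩)
        · exact fun h => hbC' (h.mp haC)
        · exact fun h => hbC (h.mp haC)
        · exact fun h => hcU (h.mp haU)
        · exact fun h => hbU (h.mp haU)
        · exact fun h => hcV (h.mp haV)
        · exact fun h => hbV' (h.mp haV)
      obtain hss | hss := hclaim
      · exact ⟨a, a', b, c, ha, ha', hb, hcA, hdec a a' b c hss (fun h => h.2.2.2.2 hcC)⟩
      · exact ⟨a, a', b', c, ha, ha', hb', hcA, hdec a a' b' c hss (fun h => h.2.2.2.2 hcC)⟩
    · -- c ∈ A \ C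
      have hcA : c ∈ A := by
        by_contra h; exact hc ⟨fun h' => absurd h' hcC, fun h' => absurd h' h⟩
      have hclaim : sep4 𝒮 a c b b' ⊆ sep4 𝒮 a a' b b'
          ∨ sep4 𝒮 a' c b b' ⊆ sep4 𝒮 a a' b b' := by
        by_contra hcl
        push_neg at hcl
        obtain ⟨U, hU, hU'⟩ := Set.not_subset.mp hcl.1
        obtain ⟨V, hV, hV'⟩ := Set.not_subset.mp hcl.2
        obtain ⟨hUS, haU, hcU, hbU, hbU'⟩ := hU
        obtain ⟨hVS, haV', hcV, hbV, hbV'⟩ := hV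
        have haU' : a' ∉ U := by
          intro h; exact hU' ⟨hUS, haU, h, hbU, hbU'⟩
        have haV : a ∉ V := by
          intro h; exact hV' ⟨hVS, h, haV', hbV, hbV'⟩
        exact hwc (wc_helper 𝒮 C U V c b a a' hCS hUS hVS
          ⟨fun h => absurd h hcC, fun h => absurd h hbC⟩
          (fun h => hcC (h.mpr haC)) (fun h => hcC (h.mpr haC'))
          (fun h => hbU (h.mp hcU)) ⟨fun _ => haU, fun _ => hcU⟩
          (fun h => haU' (h.mp hcU))
          (fun h => hbV (h.mp hcV)) (fun h => haV (h.mp hcV))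
          ⟨fun _ => haV', fun _ => hcV⟩)
      obtain hss | hss := hclaim
      · exact ⟨a, c, b, b', ha, hcA, hb, hb', hdec a c b b' hss (fun h => hcC h.2.2.1)⟩
      · exact ⟨a', c, b, b', ha', hcA, hb, hb', hdec a' c b b' hss (fun h => hcC h.2.2.1)⟩
  -- main analysis for a split A
  have main : ∀ (A : Set X), A.Nonempty → Aᶜ.Nonempty →
      ∃ a a' b b', a ∈ A ∧ a' ∈ A ∧ b ∉ A ∧ b' ∉ A ∧
        isolIdx d A Aᶜ = betaIdx d a a' b b' ∧ sep4 𝒮 a a' b b' ⊆ {A} := by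
    intro A hA hAc
    set vals := {r : ℝ | ∃ a ∈ A, ∃ a' ∈ A, ∃ b ∈ Aᶜ, ∃ b' ∈ Aᶜ, r = betaIdx d a a' b b'}
      with hvals
    have hne : vals.Nonempty := by
      obtain ⟨a, ha⟩ := hA
      obtain ⟨b, hb⟩ := hAc
      exact ⟨betaIdx d a a b b, a, ha, a, ha, b, hb, b, hb, rfl⟩
    have hleast : IsLeast vals (sInf vals) := by
      refine exists_least_halfnat vals hne ?_
      rintro x ⟨a, ha, a', ha', bb, hb, b', hb', rfl⟩
      exact hhalf a a' bb b'
    obtain ⟨a, ha, a', ha', bb, hb, b', hb', heq⟩ := hleast.1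
    refine ⟨a, a', bb, b', ha, ha', hb, hb', heq, ?_⟩
    intro C hC
    by_contra hCA
    obtain ⟨a₁, a₁', b₁, b₁', h1, h2, h3, h4, hlt⟩ :=
      reduce A a a' bb b' ha ha' hb hb' C hC hCA
    have : sInf vals ≤ betaIdx d a₁ a₁' b₁ b₁' :=
      hleast.2 ⟨a₁, h1, a₁', h2, b₁, h3, b₁', h4, rfl⟩
    rw [heq] at this
    exact absurd (lt_of_le_of_lt this hlt) (lt_irrefl _)
  -- conclusion for members of 𝒮
  have hiso : ∀ A ∈ 𝒮, isolIdx d A Aᶜ = lam A := by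
    intro A hAS
    obtain ⟨⟨hAne, hAcne, -⟩, -⟩ := hsplit A hAS
    obtain ⟨a, a', b, b', ha, ha', hb, hb', heq, hsep⟩ := main A hAne hAcne
    have hAmem : A ∈ sep4 𝒮 a a' b b' := ⟨hAS, ha, ha', hb, hb'⟩
    have hsepeq : sep4 𝒮 a a' b b' = {A} :=
      le_antisymm hsep (by simpa using hAmem)
    have := key a a' b b'
    rw [hsepeq] at this
    rw [heq, this.unique (hsingle A), hwS A hAS]
  refine ⟨⟨hdxx, hdsymm, htri⟩, fun A => ⟨fun hAS => ⟨hsplit A hAS, ?_⟩, fun hd => ?_⟩, hiso⟩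
  · rw [hiso A hAS]; exact hpos A hAS
  · by_contra hAS
    have hAcS : Aᶜ ∉ 𝒮 := fun h => hAS (by simpa using hcompl Aᶜ h)
    obtain ⟨⟨⟨hAne, hAcne, -⟩, -⟩, hpos'⟩ := hd
    obtain ⟨a, a', b, b', ha, ha', hb, hb', heq, hsep⟩ := main A hAne hAcne
    have hsepeq : sep4 𝒮 a a' b b' = ∅ := by
      ext C
      simp only [Set.mem_empty_iff_false, iff_false]
      intro hC
      exact hAS (hsep hC ▸ hC.1)
    have := key a a' b b'
    rw [hsepeq] at this
    have hbeta : betaIdx d a a' b b' = 0 := by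
      simpa using this.unique (by rw [Set.indicator_empty]; exact hasSum_zero : HasSum ((∅ : Set (Set X)).indicator w) 0)
    rw [heq, hbeta] at hpos'
    exact lt_irrefl 0 hpos'
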